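/- Let f ∈ ℤ[x₁,…,x_d] and suppose there exists a nonzero exponent vector p in the support of f such that the coefficient of x^p is negative, p has at least one odd coordinate, and p can be strictly separated by a hyperplane from the rest of the support of f with the normal vector pointing toward p. Then there exists a point q ∈ ℚ^d (with exactly one negative coordinate and the rest positive) such that f(q) > 0. -/

import Mathlib

open MvPolynomial

private lemma prod_zpow_sum {ι : Type*} (M : ℚ) (hM : M ≠ 0) (s : Finset ι) (e : ι → ℤ) :
    ∏ j ∈ s, M ^ e j = M ^ (∑ j ∈ s, e j) := by
  classical
  induction s using Finset.induction with
  | empty => simp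
  | insert _ _ h ih => simp [Finset.prod_insert h, Finset.sum_insert h, zpow_add₀ hM, ih]

private lemma int_cast_num_mul {r : ℚ} {N : ℕ} (h : (r.den : ℤ) ∣ (N:ℤ)) :
    ((r.num * ((N:ℤ) / r.den) : ℤ) : ℚ) = r * N := by
  push_cast [Int.cast_div_charZero h]
  have hd : (r.den : ℚ) ≠ 0 := by positivity
  conv_rhs => rw [← Rat.num_div_den r]
  field_simp

/-- Generalization to weakly negative support points: if a nonzero exponent
vector `p` in the support of `f` has negative coefficient, at least one odd
coordinate, and is strictly separated by a hyperplane from the rest of the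
support, then `f` is positive at some rational point having exactly one
negative coordinate and all other coordinates positive. -/
theorem stmt_13 {d : ℕ} (f : MvPolynomial (Fin d) ℤ) (p : Fin d →₀ ℕ)
    (hp : p ∈ f.support) (hp0 : p ≠ 0) (hc : f.coeff p < 0)
    (μ : Fin d) (hodd : Odd (p μ))
    (n : Fin d → ℝ) (c : ℝ)
    (hsep1 : (∑ j, n j * (p j : ℝ)) > c)
    (hsep2 : ∀ q ∈ f.support, q ≠ p → (∑ j, n j * (q j : ℝ)) < c) :
    ∃ q : Fin d → ℚ, ∃ ν : Fin d, q ν < 0 ∧ (∀ i, i ≠ ν → 0 < q i) ∧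
      0 < MvPolynomial.eval q (f.map (Int.castRingHom ℚ)) := by
  classical
  -- rational approximation of the separating functional
  set δ : ℝ := (∑ j, n j * (p j : ℝ)) - c with hδdef
  have hδ : 0 < δ := sub_pos.2 hsep1
  set K : ℝ := 1 + ∑ v ∈ f.support, ∑ j, (v j : ℝ) with hKdef
  have hK0 : 0 < K := by
    have : 0 ≤ ∑ v ∈ f.support, ∑ j, (v j : ℝ) :=
      Finset.sum_nonneg fun v _ => Finset.sum_nonneg fun j _ => by positivity
    linarith
  set ε : ℝ := δ / K with hεdef
  have hε : 0 < ε := div_pos hδ hK0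
  have hr : ∀ j : Fin d, ∃ r : ℚ, n j < (r:ℝ) ∧ (r:ℝ) < n j + ε :=
    fun j => exists_rat_btwn (by linarith)
  choose r hr1 hr2 using hr
  -- rational strict separation
  have key : ∀ v ∈ f.support, v ≠ p →
      (∑ j, r j * (v j : ℚ)) < ∑ j, r j * (p j : ℚ) := by
    intro v hv hvp
    have hvK : ∑ j, (v j : ℝ) ≤ K - 1 := by
      have h0 : ∀ w ∈ f.support, (0:ℝ) ≤ ∑ j, (w j : ℝ) := fun w _ =>
        Finset.sum_nonneg fun j _ => Nat.cast_nonneg _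
      have := Finset.single_le_sum h0 hv
      linarith
    have hvn : ∑ j, (r j : ℝ) * (v j : ℝ) ≤ (∑ j, n j * (v j : ℝ)) + ε * ∑ j, (v j : ℝ) := by
      rw [Finset.mul_sum, ← Finset.sum_add_distrib]
      refine Finset.sum_le_sum fun j _ => ?_
      have := (hr2 j).le
      nlinarith [Nat.cast_nonneg (α := ℝ) (v j)]
    have hpn : ∑ j, n j * (p j : ℝ) ≤ ∑ j, (r j : ℝ) * (p j : ℝ) := by
      refine Finset.sum_le_sum fun j _ => ?_
      have := (hr1 j).le
      nlinarith [Nat.cast_nonneg (α := ℝ) (p j)]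
    have hεv : ε * ∑ j, (v j : ℝ) < δ := by
      have h1 : ε * ∑ j, (v j : ℝ) ≤ ε * (K - 1) := by
        apply mul_le_mul_of_nonneg_left hvK hε.le
      have h2 : ε * K = δ := div_mul_cancel₀ _ hK0.ne'
      nlinarith
    have hvc : ∑ j, n j * (v j : ℝ) < c := hsep2 v hv hvp
    have hfin : ((∑ j, r j * (v j : ℚ) : ℚ) : ℝ) < ((∑ j, r j * (p j : ℚ) : ℚ) : ℝ) := by
      push_cast
      calc ∑ j, (r j : ℝ) * (v j : ℝ)
          ≤ (∑ j, n j * (v j : ℝ)) + ε * ∑ j, (v j : ℝ) := hvn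
        _ < c + δ := by linarith
        _ = ∑ j, n j * (p j : ℝ) := by rw [hδdef]; ring
        _ ≤ ∑ j, (r j : ℝ) * (p j : ℝ) := hpn
    exact_mod_cast hfin
  -- integer separating vector
  set N : ℕ := ∏ j, (r j).den with hNdef
  have hN0 : 0 < N := Finset.prod_pos fun j _ => (r j).pos
  have hNd : ∀ j : Fin d, ((r j).den : ℤ) ∣ (N : ℤ) := by
    intro j
    exact_mod_cast Int.natCast_dvd_natCast.2 (Finset.dvd_prod_of_mem _ (Finset.mem_univ j))
  set a : Fin d → ℤ := fun j => (r j).num * ((N:ℤ) / (r j).den) with hadef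
  have haq : ∀ j, ((a j : ℤ) : ℚ) = r j * N := fun j => int_cast_num_mul (hNd j)
  set A : (Fin d →₀ ℕ) → ℤ := fun v => ∑ j, a j * (v j : ℤ) with hAdef
  have key2 : ∀ v ∈ f.support, v ≠ p → A v + 1 ≤ A p := by
    intro v hv hvp
    have h1 : ((A v : ℤ) : ℚ) < ((A p : ℤ) : ℚ) := by
      have : ∀ w : Fin d →₀ ℕ, ((A w : ℤ) : ℚ) = N * ∑ j, r j * (w j : ℚ) := by
        intro w
        rw [hAdef]
        push_cast [haq]
        rw [Finset.mul_sum]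
        refine Finset.sum_congr rfl fun j _ => by ring
      rw [this, this]
      have := key v hv hvp
      have hN0' : (0:ℚ) < N := by exact_mod_cast hN0
      exact mul_lt_mul_of_pos_left this hN0'
    have : A v < A p := by exact_mod_cast h1
    omega
  -- the evaluation point
  set C : ℚ := ∑ v ∈ f.support, ((f.coeff v).natAbs : ℚ) with hCdef
  have hC0 : 0 ≤ C := Finset.sum_nonneg fun v _ => by positivity
  set M : ℚ := C + 1 with hMdef
  have hM1 : 1 ≤ M := by linarith
  have hM0 : 0 < M := by linarith
  have hMne : M ≠ 0 := hM0.ne'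
  set q : Fin d → ℚ := fun j => (if j = μ then (-1:ℚ) else 1) * M ^ (a j) with hqdef
  refine ⟨q, μ, ?_, ?_, ?_⟩
  · have hq : q μ = -(M ^ a μ) := by simp [hqdef]
    rw [hq]
    exact neg_lt_zero.2 (zpow_pos hM0 _)
  · intro i hi
    have hq : q i = M ^ a i := by simp [hqdef, hi]
    rw [hq]
    exact zpow_pos hM0 _
  -- evaluation estimate
  have hterm : ∀ v : Fin d →₀ ℕ, ∏ j, q j ^ (v j) = (-1:ℚ)^(v μ) * M ^ (A v) := by
    intro v
    have h1 : ∀ j : Fin d, q j ^ (v j)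
        = (if j = μ then (-1:ℚ) else 1)^(v j) * M ^ (a j * (v j : ℤ)) := by
      intro j
      rw [hqdef]
      rw [mul_pow, ← zpow_natCast (M ^ a j), ← zpow_mul]
    rw [Finset.prod_congr rfl fun j _ => h1 j, Finset.prod_mul_distrib]
    congr 1
    · rw [Finset.prod_eq_single μ]
      · simp
      · intro j _ hj; simp [hj]
      · intro h; exact absurd (Finset.mem_univ μ) h
    · rw [prod_zpow_sum M hMne]
  have heval : eval q (f.map (Int.castRingHom ℚ))
      = ∑ v ∈ f.support, ((f.coeff v : ℤ) : ℚ) * ((-1:ℚ)^(v μ) * M ^ (A v)) := by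
    rw [eval_map, eval₂_eq']
    exact Finset.sum_congr rfl fun v _ => by rw [hterm v]; rfl
  rw [heval, ← Finset.add_sum_erase _ _ hp]
  -- bound the main term
  have hple : (1:ℚ) ≤ -((f.coeff p : ℤ) : ℚ) := by
    have : f.coeff p ≤ -1 := by omega
    have : ((f.coeff p : ℤ) : ℚ) ≤ -1 := by exact_mod_cast this
    linarith
  have hmain : M * M ^ (A p - 1) ≤ ((f.coeff p : ℤ) : ℚ) * ((-1:ℚ)^(p μ) * M ^ (A p)) := by
    rw [hodd.neg_one_pow]
    have h1 : M * M ^ (A p - 1) = M ^ (A p) := by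
      rw [← zpow_one_add₀ hMne]; ring_nf
    rw [h1]
    have h2 : (0:ℚ) < M ^ (A p) := zpow_pos hM0 _
    nlinarith
  -- bound the error terms
  have herr : ∀ v ∈ f.support.erase p,
      -(((f.coeff v).natAbs : ℚ) * M ^ (A p - 1))
        ≤ ((f.coeff v : ℤ) : ℚ) * ((-1:ℚ)^(v μ) * M ^ (A v)) := by
    intro v hv
    have hvs := Finset.mem_of_mem_erase hv
    have hvp := Finset.ne_of_mem_erase hv
    have hle : A v ≤ A p - 1 := by have := key2 v hvs hvp; omega
    have hzle : M ^ (A v) ≤ M ^ (A p - 1) := zpow_le_zpow_right₀ hM1 hle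
    have hz0 : (0:ℚ) < M ^ (A v) := zpow_pos hM0 _
    have habs : |((f.coeff v : ℤ) : ℚ) * (-1:ℚ)^(v μ)| = ((f.coeff v).natAbs : ℚ) := by
      rw [abs_mul, abs_pow, abs_neg, abs_one, one_pow, mul_one]
      rw [← Int.cast_abs, Int.abs_eq_natAbs, Int.cast_natCast]
    have h1 : -(((f.coeff v).natAbs : ℚ)) ≤ ((f.coeff v : ℤ) : ℚ) * (-1:ℚ)^(v μ) := by
      rw [← habs]; exact neg_abs_le _
    have h2 : ((f.coeff v : ℤ) : ℚ) * ((-1:ℚ)^(v μ) * M ^ (A v))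
        = (((f.coeff v : ℤ) : ℚ) * (-1:ℚ)^(v μ)) * M ^ (A v) := by ring
    rw [h2]
    calc -(((f.coeff v).natAbs : ℚ) * M ^ (A p - 1))
        ≤ -(((f.coeff v).natAbs : ℚ) * M ^ (A v)) := by
          have : ((f.coeff v).natAbs : ℚ) * M ^ (A v)
              ≤ ((f.coeff v).natAbs : ℚ) * M ^ (A p - 1) :=
            mul_le_mul_of_nonneg_left hzle (by positivity)
          linarith
      _ ≤ (((f.coeff v : ℤ) : ℚ) * (-1:ℚ)^(v μ)) * M ^ (A v) := by
          have := mul_le_mul_of_nonneg_right h1 hz0.le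
          linarith
  have hsumerr : -(C * M ^ (A p - 1))
      ≤ ∑ v ∈ f.support.erase p, ((f.coeff v : ℤ) : ℚ) * ((-1:ℚ)^(v μ) * M ^ (A v)) := by
    have h1 : ∑ v ∈ f.support.erase p, -(((f.coeff v).natAbs : ℚ) * M ^ (A p - 1))
        ≤ ∑ v ∈ f.support.erase p, ((f.coeff v : ℤ) : ℚ) * ((-1:ℚ)^(v μ) * M ^ (A v)) :=
      Finset.sum_le_sum herr
    have h2 : ∑ v ∈ f.support.erase p, (((f.coeff v).natAbs : ℚ) * M ^ (A p - 1))
        ≤ C * M ^ (A p - 1) := by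
      rw [hCdef, Finset.sum_mul]
      refine Finset.sum_le_sum_of_subset_of_nonneg (Finset.erase_subset _ _)
        fun v _ _ => by positivity
    rw [Finset.sum_neg_distrib] at h1
    linarith
  have hz1 : (0:ℚ) < M ^ (A p - 1) := zpow_pos hM0 _
  have : M * M ^ (A p - 1) - C * M ^ (A p - 1) = M ^ (A p - 1) := by
    rw [hMdef]; ring
  nlinarith [hmain, hsumerr]
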